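/- Fix W₀ ∈ V_s and Z ∈ V_{t−1} with ℓ_q(Z, W₀) = k. The number of t-dimensional subspaces U ⊇ Z with ℓ_q(U, W₀) = k equals [s−(t−1−k) choose 1]_q = (q^{s−t+1+k}−1)/(q−1), and the number with ℓ_q(U, W₀) = k+1 equals [n−(s+k) choose 1]_q · q^{s−(t−(k+1))}. -/

import Mathlib

open Module
open scoped LinearAlgebra.Projectivization

/-- The `q`-factorial `a!_q = ∏_{k=1}^a (q^k - 1)/(q - 1)`. -/
noncomputable def qFact (q : ℚ) (a : ℕ) : ℚ := ∏ k ∈ Finset.range a, (q ^ (k + 1) - 1) / (q - 1)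

/-- The Gaussian binomial coefficient `[a choose b]_q = a!_q / (b!_q (a-b)!_q)`
(and `0` when `b > a`). -/
noncomputable def qChoose (q : ℚ) (a b : ℕ) : ℚ :=
  if b ≤ a then qFact q a / (qFact q b * qFact q (a - b)) else 0

section Aux

theorem qFact_ne_zero {q : ℚ} (hq : 1 < q) (a : ℕ) : qFact q a ≠ 0 := by
  rw [qFact, Finset.prod_ne_zero_iff]
  intro k _
  have h1 : (1 : ℚ) < q ^ (k + 1) := one_lt_pow₀ hq (by omega)
  have h2 : q - 1 ≠ 0 := by intro h; nlinarith
  exact div_ne_zero (by intro h; nlinarith) h2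

theorem qChoose_one {q : ℕ} (hq : 2 ≤ q) (m : ℕ) :
    qChoose (q : ℚ) m 1 = ((q : ℚ) ^ m - 1) / ((q : ℚ) - 1) := by
  have hq1 : (1 : ℚ) < (q : ℚ) := by exact_mod_cast hq
  have hq0 : (q : ℚ) - 1 ≠ 0 := by intro h; nlinarith
  cases m with
  | zero => simp [qChoose]
  | succ m' =>
    rw [qChoose, if_pos (by omega)]
    have h1 : qFact (q : ℚ) 1 = 1 := by
      simp [qFact, div_self hq0]
    have h2 : qFact (q : ℚ) (m' + 1) =
        qFact (q : ℚ) m' * (((q : ℚ) ^ (m' + 1) - 1) / ((q : ℚ) - 1)) := by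
      rw [qFact, Finset.prod_range_succ, ← qFact]
    have h3 : (m' + 1) - 1 = m' := rfl
    rw [h1, h2, h3, one_mul]
    exact mul_div_cancel_left₀ _ (qFact_ne_zero hq1 m')

variable {F V : Type*} [Field F] [AddCommGroup V] [Module F V]

theorem lines_count (F V : Type*) [Field F] [Fintype F] [AddCommGroup V] [Module F V]
    [Fintype V] :
    Nat.card {L : Submodule F V // finrank F L = 1} * (Fintype.card F - 1) =
      Fintype.card F ^ finrank F V - 1 := by
  classical
  have h1 : Nat.card {L : Submodule F V // finrank F L = 1} = Nat.card (ℙ F V) :=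
    (Nat.card_congr (Projectivization.equivSubmodule F V)).symm
  have fib : ∀ p : ℙ F V, {v : {v : V // v ≠ 0} // Projectivization.mk' F v = p} ≃ Fˣ := by
    intro p
    refine Equiv.symm (Equiv.ofBijective
      (fun a => ⟨⟨(a : F) • p.rep, smul_ne_zero (Units.ne_zero a) p.rep_nonzero⟩, ?_⟩) ⟨?_, ?_⟩)
    · rw [Projectivization.mk'_eq_mk]
      conv_rhs => rw [← p.mk_rep]
      rw [Projectivization.mk_eq_mk_iff]
      exact ⟨a, rfl⟩
    · intro a b hab
      simp only [Subtype.mk.injEq] at hab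
      ext
      exact smul_left_injective F p.rep_nonzero hab
    · rintro ⟨v, hv⟩
      have hv' : Projectivization.mk F v.1 v.2 = Projectivization.mk F p.rep p.rep_nonzero := by
        rw [← Projectivization.mk'_eq_mk, hv, p.mk_rep]
      rw [Projectivization.mk_eq_mk_iff] at hv'
      obtain ⟨a, ha⟩ := hv'
      exact ⟨a, by ext; exact ha⟩
  have e2 : {v : V // v ≠ 0} ≃ (ℙ F V) × Fˣ :=
    (Equiv.sigmaFiberEquiv (Projectivization.mk' F)).symm.trans
      ((Equiv.sigmaCongrRight fib).trans (Equiv.sigmaEquivProd _ _))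
  have h3 : Nat.card {v : V // v ≠ 0} = Fintype.card V - 1 := by
    rw [Nat.card_eq_fintype_card]
    have := Fintype.card_subtype_compl (fun v : V => v = 0)
    simp [Fintype.card_subtype_eq (0 : V)] at this
    simpa using this
  have h4 := Nat.card_congr e2
  rw [h3, Nat.card_prod, Nat.card_eq_fintype_card (α := Fˣ), Fintype.card_units] at h4
  rw [h1, ← h4, card_eq_pow_finrank (K := F) (V := V)]

theorem finrank_comap_mkQ [FiniteDimensional F V] (Z : Submodule F V)
    (L : Submodule F (V ⧸ Z)) :
    finrank F (L.comap Z.mkQ) = finrank F L + finrank F Z := by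
  set U := L.comap Z.mkQ with hU
  have hZU : Z ≤ U := by
    intro z hz
    simp [hU, Submodule.mem_comap, Submodule.mkQ_apply, (Submodule.Quotient.mk_eq_zero Z).2 hz]
  have hker : LinearMap.ker (Z.mkQ.comp U.subtype) = Z.comap U.subtype := by
    rw [LinearMap.ker_comp, Submodule.ker_mkQ]
  have hrange : LinearMap.range (Z.mkQ.comp U.subtype) = L := by
    rw [LinearMap.range_comp, Submodule.range_subtype, hU, Submodule.map_comap_eq,
      Submodule.range_mkQ, top_inf_eq]
  have := LinearMap.finrank_range_add_finrank_ker (Z.mkQ.comp U.subtype)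
  rw [hker, hrange] at this
  rw [← this, (Submodule.comapSubtypeEquivOfLe hZU).finrank_eq]

theorem count_step [Fintype F] [Fintype V] (Z T : Submodule F V) (hZT : Z ≤ T) :
    Nat.card {U : Submodule F V // Z ≤ U ∧ (finrank F U = finrank F Z + 1 ∧ U ≤ T)} *
      (Fintype.card F - 1) = Fintype.card F ^ (finrank F T - finrank F Z) - 1 := by
  classical
  haveI : FiniteDimensional F V := Module.Finite.of_finite
  set S : Submodule F (V ⧸ Z) := T.map Z.mkQ with hS
  have hcomapS : S.comap Z.mkQ = T := by
    rw [hS, Submodule.comap_map_mkQ, sup_eq_right.2 hZT]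
  have hrkS : finrank F S = finrank F T - finrank F Z := by
    have := finrank_comap_mkQ Z S
    rw [hcomapS] at this
    omega
  have key : ∀ L : Submodule F (V ⧸ Z),
      (finrank F L = 1 ∧ L ≤ S) ↔
        (finrank F (L.comap Z.mkQ) = finrank F Z + 1 ∧ L.comap Z.mkQ ≤ T) := by
    intro L
    have h1 := finrank_comap_mkQ Z L
    constructor
    · rintro ⟨hr, hle⟩
      refine ⟨by omega, ?_⟩
      calc L.comap Z.mkQ ≤ S.comap Z.mkQ := Submodule.comap_mono hle
        _ = T := hcomapS
    · rintro ⟨hr, hle⟩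
      refine ⟨by omega, ?_⟩
      have : (L.comap Z.mkQ).map Z.mkQ ≤ S := Submodule.map_mono hle
      rwa [Submodule.map_comap_eq, Submodule.range_mkQ, top_inf_eq] at this
  have e1 : {L : Submodule F (V ⧸ Z) // finrank F L = 1 ∧ L ≤ S} ≃
      {x : {U : Submodule F V // Z ≤ U} // finrank F x.1 = finrank F Z + 1 ∧ x.1 ≤ T} :=
    Equiv.subtypeEquiv (Submodule.comapMkQRelIso Z).toEquiv (fun L => key L)
  have e2 := Equiv.subtypeSubtypeEquivSubtypeInter (fun U : Submodule F V => Z ≤ U)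
    (fun U => finrank F U = finrank F Z + 1 ∧ U ≤ T)
  have e3a : {L' : Submodule F ↥S // finrank F L' = 1} ≃
      {x : {L : Submodule F (V ⧸ Z) // L ≤ S} // finrank F x.1 = 1} :=
    Equiv.subtypeEquiv (Submodule.MapSubtype.orderIso S).toEquiv
      (fun L' => by
        have h0 : ((Submodule.MapSubtype.orderIso S).toEquiv L' : Submodule F (V ⧸ Z)) =
            L'.map S.subtype := rfl
        rw [h0, Submodule.finrank_map_subtype_eq])
  have e3 : {L' : Submodule F ↥S // finrank F L' = 1} ≃
      {L : Submodule F (V ⧸ Z) // finrank F L = 1 ∧ L ≤ S} :=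
    e3a.trans ((Equiv.subtypeSubtypeEquivSubtypeInter (fun L : Submodule F (V ⧸ Z) => L ≤ S)
      (fun L => finrank F L = 1)).trans (Equiv.subtypeEquivRight (fun L => and_comm)))
  have hfin : Finite (V ⧸ Z) := Quotient.finite _
  haveI : Fintype (V ⧸ Z) := Fintype.ofFinite _
  haveI : Fintype ↥S := Fintype.ofFinite _
  have := lines_count F ↥S
  rw [Nat.card_congr (e3.trans (e1.trans e2)), hrkS] at this
  exact this

theorem char_lemma [FiniteDimensional F V] {W₀ Z U : Submodule F V} {u k : ℕ}
    (hZ : finrank F Z = u) (hk : k ≤ u)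
    (hℓ : finrank F Z - finrank F (Z ⊓ W₀ : Submodule F V) = k)
    (hZU : Z ≤ U) (hU : finrank F U = finrank F Z + 1) :
    (finrank F U - finrank F (U ⊓ W₀ : Submodule F V) = k ↔ U ≤ Z ⊔ W₀) ∧
    (finrank F U - finrank F (U ⊓ W₀ : Submodule F V) = k + 1 ↔ ¬ U ≤ Z ⊔ W₀) := by
  have ha' : Z ⊓ W₀ ≤ Z := inf_le_left
  have ha : finrank F (Z ⊓ W₀ : Submodule F V) ≤ u := hZ ▸ Submodule.finrank_mono ha'
  have hZW : finrank F (Z ⊔ W₀ : Submodule F V) + finrank F (Z ⊓ W₀ : Submodule F V) =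
      finrank F Z + finrank F W₀ := Submodule.finrank_sup_add_finrank_inf_eq Z W₀
  have hUW : finrank F (U ⊔ W₀ : Submodule F V) + finrank F (U ⊓ W₀ : Submodule F V) =
      finrank F U + finrank F W₀ := Submodule.finrank_sup_add_finrank_inf_eq U W₀
  have hab : finrank F (Z ⊓ W₀ : Submodule F V) ≤ finrank F (U ⊓ W₀ : Submodule F V) :=
    Submodule.finrank_mono (inf_le_inf_right W₀ hZU)
  have hbU : finrank F (U ⊓ W₀ : Submodule F V) ≤ finrank F U :=
    Submodule.finrank_mono inf_le_left
  have hsupsup : U ⊔ (Z ⊔ W₀) = U ⊔ W₀ := by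
    rw [← sup_assoc, sup_eq_left.2 hZU]
  by_cases hle : U ≤ Z ⊔ W₀
  · have hc : U ⊔ W₀ = Z ⊔ W₀ := by
      rw [← hsupsup, sup_eq_right.2 hle]
    rw [hc] at hUW
    constructor
    · constructor
      · intro _; exact hle
      · intro _; omega
    · constructor
      · intro h; omega
      · intro h; exact absurd hle h
  · have hg : finrank F (U ⊓ (Z ⊔ W₀) : Submodule F V) ≤ finrank F Z := by
      by_contra hcon
      push_neg at hcon
      have h1 : finrank F U ≤ finrank F (U ⊓ (Z ⊔ W₀) : Submodule F V) := by omega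
      have := Submodule.eq_of_le_of_finrank_le (inf_le_left : U ⊓ (Z ⊔ W₀) ≤ U) h1
      exact hle (by rw [← this]; exact inf_le_right)
    have hg' : finrank F Z ≤ finrank F (U ⊓ (Z ⊔ W₀) : Submodule F V) :=
      Submodule.finrank_mono (le_inf hZU (le_sup_left : Z ≤ Z ⊔ W₀))
    have hUZW : finrank F (U ⊔ (Z ⊔ W₀) : Submodule F V) +
        finrank F (U ⊓ (Z ⊔ W₀) : Submodule F V) =
        finrank F U + finrank F (Z ⊔ W₀ : Submodule F V) :=
      Submodule.finrank_sup_add_finrank_inf_eq U (Z ⊔ W₀)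
    rw [hsupsup] at hUZW
    constructor
    · constructor
      · intro h; omega
      · intro h; exact absurd h hle
    · constructor
      · intro _; exact hle
      · intro _; omega

theorem card_split {α : Type*} [Finite α] (p q : α → Prop) :
    Nat.card {x // p x ∧ q x} + Nat.card {x // p x ∧ ¬ q x} = Nat.card {x // p x} := by
  classical
  rw [← Nat.card_sum]
  exact Nat.card_congr
    ((Equiv.sumCongr (Equiv.subtypeSubtypeEquivSubtypeInter p q).symm
      (Equiv.subtypeSubtypeEquivSubtypeInter p (fun x => ¬ q x)).symm).trans
      (Equiv.sumCompl (fun x : {x // p x} => q x.1)))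

end Aux

set_option maxHeartbeats 1000000 in
/-- Fix `W₀ ∈ V_s` and `Z ∈ V_{t-1}` with `ℓ_q(Z,W₀) = k` (here `t = u+1`).  The
number of `t`-dimensional subspaces `U ⊇ Z` with `ℓ_q(U,W₀) = k` equals
`[s-(t-1-k) choose 1]_q`, and the number with `ℓ_q(U,W₀) = k+1` equals
`[n-(s+k) choose 1]_q · q^(s-(t-(k+1)))`. -/
theorem stmt16 (q n s u k : ℕ) (F : Type) [Field F] [Fintype F] (hF : Fintype.card F = q)
    (hk : k ≤ u) (hu : u + 1 ≤ s) (hsk : s + k ≤ n)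
    (W₀ Z : Submodule F (Fin n → F)) (hW₀ : finrank F W₀ = s) (hZ : finrank F Z = u)
    (hℓ : finrank F Z - finrank F ↥(Z ⊓ W₀) = k) :
    (Nat.card {U : Submodule F (Fin n → F) //
        Z ≤ U ∧ finrank F U = u + 1 ∧ finrank F U - finrank F ↥(U ⊓ W₀) = k} : ℚ) =
      qChoose q (s - (u - k)) 1 ∧
    (Nat.card {U : Submodule F (Fin n → F) //
        Z ≤ U ∧ finrank F U = u + 1 ∧ finrank F U - finrank F ↥(U ⊓ W₀) = k + 1} : ℚ) =
      qChoose q (n - (s + k)) 1 * (q : ℚ) ^ (s - (u - k)) := by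
  classical
  haveI : FiniteDimensional F (Fin n → F) := Module.Finite.of_finite
  haveI : Finite (Submodule F (Fin n → F)) :=
    Finite.of_injective (fun U : Submodule F (Fin n → F) => (U : Set (Fin n → F))) (fun _ _ h => by
      exact SetLike.coe_injective h)
  have hq2 : 2 ≤ q := hF ▸ Fintype.one_lt_card
  have hnV : finrank F (Fin n → F) = n := Module.finrank_fin_fun F
  set T : Submodule F (Fin n → F) := Z ⊔ W₀ with hT
  -- dimension facts
  have hZW0le : finrank F (Z ⊓ W₀ : Submodule F (Fin n → F)) ≤ u := hZ ▸ Submodule.finrank_mono inf_le_left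
  have hZW : finrank F T + finrank F (Z ⊓ W₀ : Submodule F (Fin n → F)) =
      finrank F Z + finrank F W₀ := Submodule.finrank_sup_add_finrank_inf_eq Z W₀
  have hrkT : finrank F T = s + k := by omega
  -- characterization of the two predicates
  have charA : ∀ U : Submodule F (Fin n → F),
      (Z ≤ U ∧ finrank F U = u + 1 ∧ finrank F U - finrank F (U ⊓ W₀ : Submodule F (Fin n → F)) = k) ↔
      (Z ≤ U ∧ (finrank F U = finrank F Z + 1 ∧ U ≤ T)) := by
    intro U
    constructor
    · rintro ⟨h1, h2, h3⟩
      have h2' : finrank F U = finrank F Z + 1 := by omega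
      exact ⟨h1, h2', ((char_lemma hZ hk hℓ h1 h2').1).1 h3⟩
    · rintro ⟨h1, h2, h3⟩
      exact ⟨h1, by omega, ((char_lemma hZ hk hℓ h1 h2).1).2 h3⟩
  have charB : ∀ U : Submodule F (Fin n → F),
      (Z ≤ U ∧ finrank F U = u + 1 ∧ finrank F U - finrank F (U ⊓ W₀ : Submodule F (Fin n → F)) = k + 1) ↔
      (Z ≤ U ∧ (finrank F U = finrank F Z + 1 ∧ ¬ U ≤ T)) := by
    intro U
    constructor
    · rintro ⟨h1, h2, h3⟩
      have h2' : finrank F U = finrank F Z + 1 := by omega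
      exact ⟨h1, h2', ((char_lemma hZ hk hℓ h1 h2').2).1 h3⟩
    · rintro ⟨h1, h2, h3⟩
      exact ⟨h1, by omega, ((char_lemma hZ hk hℓ h1 h2).2).2 h3⟩
  -- counting
  set cA := Nat.card {U : Submodule F (Fin n → F) //
      Z ≤ U ∧ finrank F U = u + 1 ∧ finrank F U - finrank F (U ⊓ W₀ : Submodule F (Fin n → F)) = k} with hcA
  set cB := Nat.card {U : Submodule F (Fin n → F) //
      Z ≤ U ∧ finrank F U = u + 1 ∧
        finrank F U - finrank F (U ⊓ W₀ : Submodule F (Fin n → F)) = k + 1} with hcB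
  have hcA' : cA = Nat.card {U : Submodule F (Fin n → F) //
      Z ≤ U ∧ (finrank F U = finrank F Z + 1 ∧ U ≤ T)} :=
    Nat.card_congr (Equiv.subtypeEquivRight charA)
  have hcB' : cB = Nat.card {U : Submodule F (Fin n → F) //
      Z ≤ U ∧ (finrank F U = finrank F Z + 1 ∧ ¬ U ≤ T)} :=
    Nat.card_congr (Equiv.subtypeEquivRight charB)
  have countA : cA * (q - 1) = q ^ (s + k - u) - 1 := by
    have h := count_step Z T le_sup_left
    rw [hF, hrkT] at h
    rw [hcA', h, hZ]
  have countTot : (cA + cB) * (q - 1) = q ^ (n - u) - 1 := by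
    have hsplit := card_split (α := Submodule F (Fin n → F))
      (fun U => Z ≤ U ∧ finrank F U = finrank F Z + 1) (fun U => U ≤ T)
    have h1 : Nat.card {U : Submodule F (Fin n → F) //
        (Z ≤ U ∧ finrank F U = finrank F Z + 1) ∧ U ≤ T} = cA := by
      rw [hcA']
      exact Nat.card_congr (Equiv.subtypeEquivRight (fun U => and_assoc))
    have h2 : Nat.card {U : Submodule F (Fin n → F) //
        (Z ≤ U ∧ finrank F U = finrank F Z + 1) ∧ ¬ U ≤ T} = cB := by
      rw [hcB']
      exact Nat.card_congr (Equiv.subtypeEquivRight (fun U => and_assoc))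
    have h3 : Nat.card {U : Submodule F (Fin n → F) //
        Z ≤ U ∧ finrank F U = finrank F Z + 1} = Nat.card {U : Submodule F (Fin n → F) //
        Z ≤ U ∧ (finrank F U = finrank F Z + 1 ∧ U ≤ (⊤ : Submodule F (Fin n → F)))} :=
      Nat.card_congr (Equiv.subtypeEquivRight (fun U => by simp))
    have h4 := count_step Z (⊤ : Submodule F (Fin n → F)) le_top
    rw [hF, finrank_top, hnV] at h4
    rw [h1, h2] at hsplit
    rw [hsplit, h3, h4, hZ]
  -- pass to ℚ
  have hq0 : ((q : ℚ)) - 1 ≠ 0 := by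
    have : (2 : ℚ) ≤ (q : ℚ) := by exact_mod_cast hq2
    intro h; nlinarith
  have hm : s - (u - k) = s + k - u := by omega
  have hnu : n - u = (s + k - u) + (n - (s + k)) := by omega
  have cA' : (cA : ℚ) * ((q : ℚ) - 1) = (q : ℚ) ^ (s + k - u) - 1 := by
    have h : ((cA * (q - 1) : ℕ) : ℚ) = ((q ^ (s + k - u) - 1 : ℕ) : ℚ) := by rw [countA]
    rwa [Nat.cast_mul, Nat.cast_sub (by omega : 1 ≤ q),
      Nat.cast_sub (Nat.one_le_pow _ _ (by omega)), Nat.cast_pow, Nat.cast_one] at h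
  have ctot' : ((cA : ℚ) + (cB : ℚ)) * ((q : ℚ) - 1) = (q : ℚ) ^ (n - u) - 1 := by
    have h : (((cA + cB) * (q - 1) : ℕ) : ℚ) = ((q ^ (n - u) - 1 : ℕ) : ℚ) := by rw [countTot]
    rwa [Nat.cast_mul, Nat.cast_add, Nat.cast_sub (by omega : 1 ≤ q),
      Nat.cast_sub (Nat.one_le_pow _ _ (by omega)), Nat.cast_pow, Nat.cast_one] at h
  have cB' : (cB : ℚ) * ((q : ℚ) - 1) = (q : ℚ) ^ (n - u) - (q : ℚ) ^ (s + k - u) := by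
    linear_combination ctot' - cA'
  constructor
  · rw [hm, qChoose_one hq2, eq_div_iff hq0]
    exact cA'
  · rw [hm, qChoose_one hq2, div_mul_eq_mul_div, eq_comm, div_eq_iff hq0, eq_comm]
    rw [hnu, pow_add] at cB'
    linear_combination cB'
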